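/- arXiv:1301.5829 — 4 statements merged into one kernel-verified Lean document; each statement's English description precedes it below -/
import Mathlib

section
/- Let r ≥ 1 be an integer. There exists a formal power series G_r ∈ ℤ[[u_1,…,u_r]] such that g_r(b) = 1 + s_r · G_r(s_1,…,s_r) in ℤ[[b_1,…,b_r]], where the right-hand side is obtained by substituting for u_1,…,u_r the elementary symmetric polynomials s_1,…,s_r in b_1,…,b_r (each of which has zero constant term, so the substitution is well defined). -/
open MvPowerSeries Finset

/-- The unit of the power series ring `ℤ[[X_s : s ∈ σ]]` determined by a power series
with constant coefficient `1`. -/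
noncomputable def unitOf {σ : Type*} (φ : MvPowerSeries σ ℤ)
    (h : MvPowerSeries.constantCoeff φ = 1) : (MvPowerSeries σ ℤ)ˣ where
  val := φ
  inv := MvPowerSeries.invOfUnit φ 1
  val_inv := MvPowerSeries.mul_invOfUnit φ 1 (by simpa using h)
  inv_val := MvPowerSeries.invOfUnit_mul φ 1 (by simpa using h)

/-- `g_r(b) := ∏_{j=0}^r ∏_{k_1<⋯<k_j} (1 - b_{k_1} - ⋯ - b_{k_j})^{(-1)^j}`, as a unit of
`ℤ[[b_1,…,b_r]]`; the inner double product is the product over all subsets `S ⊆ {b_1,…,b_r}`. -/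
noncomputable def gr (r : ℕ) : (MvPowerSeries (Fin r) ℤ)ˣ :=
  ∏ S : Finset (Fin r),
    (unitOf (1 - ∑ k ∈ S, MvPowerSeries.X k) (by simp)) ^ ((-1 : ℤ) ^ S.card)

/-- Substitution of the elementary symmetric polynomials `s_1,…,s_r` in `b_1,…,b_r` (which
have zero constant term, so the substitution is well defined) for the variables `u_1,…,u_r`
of a power series `G ∈ ℤ[[u_1,…,u_r]]`.  The coefficient of a monomial `ν` in `G(s_1,…,s_r)`
only receives contributions from the finitely many exponent vectors `μ` with
`μ ≤ (deg ν, …, deg ν)` pointwise (the monomial `s_1^{μ_1} ⋯ s_r^{μ_r}` is homogeneous of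
degree `≥ μ_1 + ⋯ + μ_r`), so it is given by the finite sum below. -/
noncomputable def substEsymm (r : ℕ) (G : MvPowerSeries (Fin r) ℤ) :
    MvPowerSeries (Fin r) ℤ :=
  fun ν : Fin r →₀ ℕ =>
    ∑ μ ∈ Finset.Iic (Finsupp.equivFunOnFinite.symm fun _ => ν.degree),
      MvPowerSeries.coeff μ G *
        MvPolynomial.coeff ν (∏ j : Fin r, MvPolynomial.esymm (Fin r) ℤ ((j : ℕ) + 1) ^ μ j)

namespace GrAux

variable {r : ℕ}

lemma coeff_apply (f : MvPowerSeries (Fin r) ℤ) (ν : Fin r →₀ ℕ) :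
    MvPowerSeries.coeff ν f = f ν := rfl

/-- Setting the variable `b k` to `0`, as a ring homomorphism of `ℤ[[b]]`. -/
def setZeroHom (r : ℕ) (k : Fin r) :
    MvPowerSeries (Fin r) ℤ →+* MvPowerSeries (Fin r) ℤ where
  toFun f := fun ν => if ν k = 0 then f ν else 0
  map_one' := by
    funext ν
    show (if ν k = 0 then MvPowerSeries.coeff ν 1 else 0) = MvPowerSeries.coeff ν 1
    by_cases h : ν k = 0
    · rw [if_pos h]
    · rw [if_neg h, MvPowerSeries.coeff_one, if_neg]
      intro h0
      rw [h0] at h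
      simp at h
  map_mul' f g := by
    funext ν
    by_cases h : ν k = 0
    · simp only [h, if_true]
      show MvPowerSeries.coeff ν (f * g) = MvPowerSeries.coeff ν (_ * _)
      rw [MvPowerSeries.coeff_mul]
      erw [MvPowerSeries.coeff_mul]
      refine Finset.sum_congr rfl fun p hp => ?_
      rw [Finset.HasAntidiagonal.mem_antidiagonal] at hp
      have h1 : p.1 k = 0 ∧ p.2 k = 0 := by
        have : p.1 k + p.2 k = 0 := by rw [← Finsupp.add_apply, hp, h]
        omega
      show f p.1 * g p.2 = (if p.1 k = 0 then f p.1 else 0) * (if p.2 k = 0 then g p.2 else 0)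
      rw [if_pos h1.1, if_pos h1.2]
    · simp only [h, if_false]
      symm
      show MvPowerSeries.coeff ν ((_ : MvPowerSeries (Fin r) ℤ) * _) = 0
      erw [MvPowerSeries.coeff_mul]
      refine Finset.sum_eq_zero fun p hp => ?_
      rw [Finset.HasAntidiagonal.mem_antidiagonal] at hp
      have h1 : p.1 k ≠ 0 ∨ p.2 k ≠ 0 := by
        by_contra hc
        push_neg at hc
        apply h
        rw [← hp, Finsupp.add_apply, hc.1, hc.2]
      show (if p.1 k = 0 then f p.1 else 0) * (if p.2 k = 0 then g p.2 else 0) = 0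
      rcases h1 with h1 | h1
      · rw [if_neg h1, zero_mul]
      · rw [if_neg h1, mul_zero]
  map_zero' := by
    funext ν
    show (if ν k = 0 then (0 : MvPowerSeries (Fin r) ℤ) ν else 0) = (0 : MvPowerSeries (Fin r) ℤ) ν
    split_ifs <;> rfl
  map_add' f g := by
    funext ν
    show (if ν k = 0 then f ν + g ν else 0)
      = (if ν k = 0 then f ν else 0) + (if ν k = 0 then g ν else 0)
    split_ifs <;> simp

lemma setZeroHom_apply (k : Fin r) (f : MvPowerSeries (Fin r) ℤ) (ν : Fin r →₀ ℕ) :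
    setZeroHom r k f ν = if ν k = 0 then f ν else 0 := rfl

lemma setZeroHom_X (k i : Fin r) :
    setZeroHom r k (MvPowerSeries.X i) = if i = k then 0 else MvPowerSeries.X i := by
  funext ν
  rw [setZeroHom_apply]
  by_cases hik : i = k
  · subst hik
    rw [if_pos rfl]
    by_cases h : ν i = 0
    · rw [if_pos h]
      show MvPowerSeries.coeff ν (MvPowerSeries.X i) = (0 : MvPowerSeries (Fin r) ℤ) ν
      rw [MvPowerSeries.coeff_X]
      have : ν ≠ Finsupp.single i 1 := by
        intro he; rw [he] at h; simp at h
      rw [if_neg this]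
      rfl
    · rw [if_neg h]; rfl
  · rw [if_neg hik]
    by_cases h : ν k = 0
    · rw [if_pos h]
    · rw [if_neg h]
      symm
      show MvPowerSeries.coeff ν (MvPowerSeries.X i) = 0
      rw [MvPowerSeries.coeff_X]
      have : ν ≠ Finsupp.single i 1 := by
        intro he
        rw [he] at h
        apply h
        rw [Finsupp.single_apply, if_neg hik]
      simp [this]


lemma emd_symm_emd (e : Equiv.Perm (Fin r)) (ν : Fin r →₀ ℕ) :
    Finsupp.equivMapDomain e (Finsupp.equivMapDomain e.symm ν) = ν := by
  ext i; simp

lemma emd_emd_symm (e : Equiv.Perm (Fin r)) (ν : Fin r →₀ ℕ) :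
    Finsupp.equivMapDomain e.symm (Finsupp.equivMapDomain e ν) = ν := by
  ext i; simp

/-- Renaming the variables along a permutation, as a ring homomorphism of `ℤ[[b]]`. -/
def renameHom (e : Equiv.Perm (Fin r)) :
    MvPowerSeries (Fin r) ℤ →+* MvPowerSeries (Fin r) ℤ where
  toFun f := fun ν => f (Finsupp.equivMapDomain e.symm ν)
  map_one' := by
    funext ν
    show MvPowerSeries.coeff (Finsupp.equivMapDomain e.symm ν) 1 = MvPowerSeries.coeff ν 1
    rw [MvPowerSeries.coeff_one, MvPowerSeries.coeff_one]
    have : Finsupp.equivMapDomain e.symm ν = 0 ↔ ν = 0 := by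
      constructor
      · intro h
        have := congrArg (Finsupp.equivMapDomain (e : Equiv.Perm (Fin r))) h
        rw [emd_symm_emd] at this
        rw [this]; ext i; simp
      · intro h; rw [h]; ext i; simp
    by_cases h : ν = 0
    · rw [if_pos (this.mpr h), if_pos h]
    · rw [if_neg (fun hc => h (this.mp hc)), if_neg h]
  map_mul' f g := by
    funext ν
    show MvPowerSeries.coeff (Finsupp.equivMapDomain e.symm ν) (f * g)
      = MvPowerSeries.coeff ν (_ * _)
    rw [MvPowerSeries.coeff_mul]
    erw [MvPowerSeries.coeff_mul]
    have D := (Finsupp.domCongr (M := ℕ) e.symm : (Fin r →₀ ℕ) ≃+ (Fin r →₀ ℕ))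
    refine Finset.sum_nbij'
      (fun p => (Finsupp.equivMapDomain e p.1, Finsupp.equivMapDomain e p.2))
      (fun p => (Finsupp.equivMapDomain e.symm p.1, Finsupp.equivMapDomain e.symm p.2))
      ?_ ?_ ?_ ?_ ?_
    · intro p hp
      rw [Finset.HasAntidiagonal.mem_antidiagonal] at hp ⊢
      have : (Finsupp.domCongr (M := ℕ) e) p.1 + (Finsupp.domCongr (M := ℕ) e) p.2
          = (Finsupp.domCongr (M := ℕ) e) (p.1 + p.2) := (map_add _ _ _).symm
      show (Finsupp.domCongr (M := ℕ) e) p.1 + (Finsupp.domCongr (M := ℕ) e) p.2 = ν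
      rw [this, hp]
      exact emd_symm_emd e ν
    · intro p hp
      rw [Finset.HasAntidiagonal.mem_antidiagonal] at hp ⊢
      have : (Finsupp.domCongr (M := ℕ) e.symm) p.1 + (Finsupp.domCongr (M := ℕ) e.symm) p.2
          = (Finsupp.domCongr (M := ℕ) e.symm) (p.1 + p.2) := (map_add _ _ _).symm
      show (Finsupp.domCongr (M := ℕ) e.symm) p.1 + (Finsupp.domCongr (M := ℕ) e.symm) p.2
        = Finsupp.equivMapDomain e.symm ν
      rw [this, hp]; rfl
    · intro p hp
      ext : 1 <;> exact emd_emd_symm e _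
    · intro p hp
      ext : 1 <;> exact emd_symm_emd e _
    · intro p hp
      show f p.1 * g p.2 = f (Finsupp.equivMapDomain e.symm (Finsupp.equivMapDomain e p.1))
        * g (Finsupp.equivMapDomain e.symm (Finsupp.equivMapDomain e p.2))
      rw [emd_emd_symm, emd_emd_symm]
  map_zero' := by funext ν; rfl
  map_add' f g := by funext ν; rfl

lemma renameHom_apply (e : Equiv.Perm (Fin r)) (f : MvPowerSeries (Fin r) ℤ) (ν : Fin r →₀ ℕ) :
    renameHom e f ν = f (Finsupp.equivMapDomain e.symm ν) := rfl

lemma renameHom_X (e : Equiv.Perm (Fin r)) (i : Fin r) :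
    renameHom e (MvPowerSeries.X i) = MvPowerSeries.X (e i) := by
  funext ν
  rw [renameHom_apply]
  show MvPowerSeries.coeff _ (MvPowerSeries.X i) = MvPowerSeries.coeff ν (MvPowerSeries.X (e i))
  rw [MvPowerSeries.coeff_X, MvPowerSeries.coeff_X]
  have : Finsupp.equivMapDomain e.symm ν = Finsupp.single i 1 ↔ ν = Finsupp.single (e i) 1 := by
    constructor
    · intro h
      have := congrArg (Finsupp.equivMapDomain (e : Equiv.Perm (Fin r))) h
      rwa [emd_symm_emd, Finsupp.equivMapDomain_single] at this
    · intro h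
      rw [h, Finsupp.equivMapDomain_single, Equiv.symm_apply_apply]
  by_cases h : ν = Finsupp.single (e i) 1
  · rw [if_pos (this.mpr h), if_pos h]
  · rw [if_neg (fun hc => h (this.mp hc)), if_neg h]


lemma unitOf_val {σ : Type*} (φ : MvPowerSeries σ ℤ) (h) :
    ((unitOf φ h : (MvPowerSeries σ ℤ)ˣ) : MvPowerSeries σ ℤ) = φ := rfl

lemma unitOf_congr {σ : Type*} {φ ψ : MvPowerSeries σ ℤ} (h : φ = ψ) (hφ) (hψ) :
    unitOf φ hφ = unitOf ψ hψ := by subst h; rfl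

lemma map_gr (φ : MvPowerSeries (Fin r) ℤ →+* MvPowerSeries (Fin r) ℤ) :
    Units.map φ.toMonoidHom (gr r)
      = ∏ S : Finset (Fin r),
        (Units.map φ.toMonoidHom (unitOf (1 - ∑ k ∈ S, MvPowerSeries.X k) (by simp)))
          ^ ((-1 : ℤ) ^ S.card) := by
  rw [gr, map_prod]
  exact Finset.prod_congr rfl fun S _ => map_zpow _ _ _

lemma map_gr' (φ : MvPowerSeries (Fin r) ℤ →+* ℤ) :
    Units.map φ.toMonoidHom (gr r)
      = ∏ S : Finset (Fin r),
        (Units.map φ.toMonoidHom (unitOf (1 - ∑ k ∈ S, MvPowerSeries.X k) (by simp)))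
          ^ ((-1 : ℤ) ^ S.card) := by
  rw [gr, map_prod]
  exact Finset.prod_congr rfl fun S _ => map_zpow _ _ _

lemma constantCoeff_gr :
    MvPowerSeries.constantCoeff ((gr r : MvPowerSeries (Fin r) ℤ)) = 1 := by
  have h : Units.map (MvPowerSeries.constantCoeff).toMonoidHom (gr r) = 1 := by
    rw [map_gr']
    apply Finset.prod_eq_one
    intro S _
    have h1 : Units.map (MvPowerSeries.constantCoeff).toMonoidHom
        (unitOf (1 - ∑ k ∈ S, MvPowerSeries.X k) (by simp)) = 1 := by
      apply Units.ext
      rw [Units.coe_map]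
      show MvPowerSeries.constantCoeff (1 - ∑ k ∈ S, MvPowerSeries.X k) = 1
      simp
    rw [h1, one_zpow]
  have := congrArg (Units.val) h
  rw [Units.coe_map] at this
  exact this

lemma renameHom_gr (e : Equiv.Perm (Fin r)) :
    Units.map (renameHom e).toMonoidHom (gr r) = gr r := by
  rw [map_gr]
  rw [gr]
  refine Fintype.prod_equiv (Equiv.finsetCongr e) _ _ (fun S => ?_)
  have hcard : (Equiv.finsetCongr e S).card = S.card := Finset.card_map _
  rw [hcard]
  congr 1
  apply Units.ext
  rw [Units.coe_map]
  show renameHom e (1 - ∑ k ∈ S, MvPowerSeries.X k)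
    = ((unitOf (1 - ∑ k ∈ Equiv.finsetCongr e S, MvPowerSeries.X k) (by simp)
        : (MvPowerSeries (Fin r) ℤ)ˣ) : MvPowerSeries (Fin r) ℤ)
  rw [unitOf_val, map_sub, map_one, map_sum]
  congr 1
  rw [Equiv.finsetCongr_apply, Finset.sum_map]
  refine Finset.sum_congr rfl fun i _ => ?_
  rw [renameHom_X]
  rfl

lemma gr_symm (e : Equiv.Perm (Fin r)) (ν : Fin r →₀ ℕ) :
    (gr r : MvPowerSeries (Fin r) ℤ) (Finsupp.equivMapDomain e ν)
      = (gr r : MvPowerSeries (Fin r) ℤ) ν := by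
  have h := congrArg (Units.val) (renameHom_gr e.symm)
  rw [Units.coe_map] at h
  have h2 := congrArg (fun f => f ν) h
  simpa [renameHom_apply] using h2

lemma setZeroHom_gr (k : Fin r) :
    Units.map (setZeroHom r k).toMonoidHom (gr r) = 1 := by
  rw [map_gr]
  have key : ∀ S : Finset (Fin r),
      Units.map (setZeroHom r k).toMonoidHom
        (unitOf (1 - ∑ i ∈ S, MvPowerSeries.X i) (by simp))
      = unitOf (1 - ∑ i ∈ S.erase k, MvPowerSeries.X i) (by simp) := by
    intro S
    apply Units.ext
    rw [Units.coe_map]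
    show setZeroHom r k (1 - ∑ i ∈ S, MvPowerSeries.X i)
      = 1 - ∑ i ∈ S.erase k, MvPowerSeries.X i
    rw [map_sub, map_one, map_sum]
    congr 1
    rw [← Finset.sum_erase (a := k) S
      (f := fun i => setZeroHom r k (MvPowerSeries.X i))
      (by show setZeroHom r k (MvPowerSeries.X k) = 0; rw [setZeroHom_X, if_pos rfl])]
    refine Finset.sum_congr rfl fun i hi => ?_
    show setZeroHom r k (MvPowerSeries.X i) = MvPowerSeries.X i
    rw [setZeroHom_X, if_neg (Finset.ne_of_mem_erase hi)]
  have step : (∏ S : Finset (Fin r),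
      (Units.map (setZeroHom r k).toMonoidHom
        (unitOf (σ := Fin r) (1 - ∑ i ∈ S, MvPowerSeries.X i) (by simp)))
          ^ ((-1 : ℤ) ^ S.card))
      = ∏ S : Finset (Fin r),
        (unitOf (σ := Fin r) (1 - ∑ i ∈ S.erase k, MvPowerSeries.X i)
          (by simp)) ^ ((-1 : ℤ) ^ S.card) := by
    refine Finset.prod_congr rfl fun S _ => ?_
    rw [key S]
  rw [step]
  apply Finset.prod_involution (g := fun S _ => if k ∈ S then S.erase k else insert k S)
  · intro S _
    by_cases hk : k ∈ S
    · simp only [hk, if_true]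
      rw [unitOf_congr
        (φ := 1 - ∑ i ∈ (S.erase k).erase k, (MvPowerSeries.X i : MvPowerSeries (Fin r) ℤ))
        (ψ := 1 - ∑ i ∈ S.erase k, (MvPowerSeries.X i : MvPowerSeries (Fin r) ℤ))
        (by rw [Finset.erase_idem]) (by simp) (by simp), ← zpow_add]
      have hc : S.card = (S.erase k).card + 1 := by
        rw [Finset.card_erase_of_mem hk]
        have : 1 ≤ S.card := Finset.card_pos.mpr ⟨k, hk⟩
        omega
      rw [hc, pow_succ]
      have : ((-1 : ℤ) ^ (S.erase k).card * -1 + (-1 : ℤ) ^ (S.erase k).card) = 0 := by ring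
      rw [this, zpow_zero]
    · simp only [hk, if_false]
      rw [unitOf_congr (φ := 1 - ∑ i ∈ S.erase k, (MvPowerSeries.X i : MvPowerSeries (Fin r) ℤ))
        (ψ := 1 - ∑ i ∈ S, (MvPowerSeries.X i : MvPowerSeries (Fin r) ℤ))
        (by rw [Finset.erase_eq_of_notMem hk]) (by simp) (by simp),
        unitOf_congr (φ := 1 - ∑ i ∈ (insert k S).erase k, (MvPowerSeries.X i : MvPowerSeries (Fin r) ℤ))
        (ψ := 1 - ∑ i ∈ S, (MvPowerSeries.X i : MvPowerSeries (Fin r) ℤ))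
        (by rw [Finset.erase_insert hk]) (by simp) (by simp), ← zpow_add]
      have hc : (insert k S).card = S.card + 1 := Finset.card_insert_of_notMem hk
      rw [hc, pow_succ]
      have : ((-1 : ℤ) ^ S.card + (-1 : ℤ) ^ S.card * -1) = 0 := by ring
      rw [this, zpow_zero]
  · intro S _ _
    by_cases hk : k ∈ S
    · simp only [hk, if_true]
      intro hc
      exact (Finset.erase_eq_self.mp hc) hk
    · simp only [hk, if_false]
      intro hc
      exact hk (hc ▸ Finset.mem_insert_self k S)
  · intro S _
    by_cases hk : k ∈ S
    · simp only [hk, if_true, Finset.notMem_erase k S, if_false]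
      exact Finset.insert_erase hk
    · simp only [hk, if_false, Finset.mem_insert_self, if_true]
      exact Finset.erase_insert hk
  · intro S _; exact Finset.mem_univ _

lemma coeff_gr_eq_zero (k : Fin r) (ν : Fin r →₀ ℕ) (hν : ν ≠ 0) (hk : ν k = 0) :
    (gr r : MvPowerSeries (Fin r) ℤ) ν = 0 := by
  have h := congrArg (Units.val) (setZeroHom_gr k)
  rw [Units.coe_map] at h
  have h2 := congrArg (fun f => f ν) h
  have h3 : (if ν k = 0 then (gr r : MvPowerSeries (Fin r) ℤ) ν else 0)
      = (1 : MvPowerSeries (Fin r) ℤ) ν := h2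
  rw [if_pos hk] at h3
  rw [h3]
  show MvPowerSeries.coeff ν 1 = 0
  rw [MvPowerSeries.coeff_one, if_neg hν]


/-- The exponent vector `(1,…,1)`. -/
noncomputable def onef (r : ℕ) : Fin r →₀ ℕ := Finsupp.equivFunOnFinite.symm (fun _ => 1)

lemma onef_apply (i : Fin r) : onef r i = 1 := rfl

/-- The quotient `(g_r - 1) / (b_1 ⋯ b_r)`, defined coefficientwise. -/
noncomputable def q (r : ℕ) : MvPowerSeries (Fin r) ℤ :=
  fun ν => (gr r : MvPowerSeries (Fin r) ℤ) (ν + onef r)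

lemma g_eq (hr : 1 ≤ r) :
    (gr r : MvPowerSeries (Fin r) ℤ)
      = 1 + MvPowerSeries.monomial (onef r) 1 * q r := by
  apply MvPowerSeries.ext
  intro ν
  rw [map_add, MvPowerSeries.coeff_one, MvPowerSeries.coeff_monomial_mul]
  by_cases hν : ν = 0
  · subst hν
    have h1 : ¬ onef r ≤ (0 : Fin r →₀ ℕ) := by
      intro hle
      have := (Finsupp.le_def.mp hle) ⟨0, hr⟩
      rw [onef_apply] at this
      simp at this
    rw [if_pos rfl, if_neg h1, add_zero]
    rw [MvPowerSeries.coeff_zero_eq_constantCoeff_apply]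
    exact constantCoeff_gr
  · rw [if_neg hν, zero_add]
    by_cases hle : onef r ≤ ν
    · rw [if_pos hle, one_mul]
      show MvPowerSeries.coeff ν (gr r : MvPowerSeries (Fin r) ℤ) = q r (ν - onef r)
      show (gr r : MvPowerSeries (Fin r) ℤ) ν
        = (gr r : MvPowerSeries (Fin r) ℤ) ((ν - onef r) + onef r)
      rw [tsub_add_cancel_of_le hle]
    · rw [if_neg hle]
      have : ∃ k, ν k = 0 := by
        rw [Finsupp.le_def] at hle
        push_neg at hle
        obtain ⟨k, hk⟩ := hle
        rw [onef_apply] at hk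
        exact ⟨k, by omega⟩
      obtain ⟨k, hk⟩ := this
      exact coeff_gr_eq_zero k ν hν hk

lemma powersetCard_univ : Finset.powersetCard r (univ : Finset (Fin r)) = {univ} := by
  ext S
  simp only [Finset.mem_powersetCard, Finset.mem_singleton]
  constructor
  · rintro ⟨-, hcard⟩
    apply Finset.eq_univ_of_card
    rw [hcard, Fintype.card_fin]
  · rintro rfl
    exact ⟨Finset.Subset.refl _, by simp⟩

lemma esymm_eq_monomial :
    (MvPolynomial.esymm (Fin r) ℤ r : MvPowerSeries (Fin r) ℤ)
      = MvPowerSeries.monomial (onef r) 1 := by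
  have h1 : MvPolynomial.esymm (Fin r) ℤ r = MvPolynomial.monomial (onef r) (1 : ℤ) := by
    rw [MvPolynomial.esymm, powersetCard_univ, Finset.sum_singleton]
    rw [MvPolynomial.monomial_eq]
    have hsupp : (onef r).support = univ := by
      ext i
      simp [Finsupp.mem_support_iff, onef_apply]
    rw [map_one, one_mul, Finsupp.prod]
    rw [hsupp]
    refine Finset.prod_congr rfl fun i _ => ?_
    rw [onef_apply, pow_one]
  rw [h1, MvPolynomial.coe_monomial]

lemma q_symm (e : Equiv.Perm (Fin r)) (ν : Fin r →₀ ℕ) :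
    q r (Finsupp.equivMapDomain e ν) = q r ν := by
  show (gr r : MvPowerSeries (Fin r) ℤ) (Finsupp.equivMapDomain e ν + onef r)
    = (gr r : MvPowerSeries (Fin r) ℤ) (ν + onef r)
  have h : Finsupp.equivMapDomain e ν + onef r = Finsupp.equivMapDomain e (ν + onef r) := by
    ext i
    simp [onef_apply, Finsupp.equivMapDomain_apply]
  rw [h, gr_symm]

lemma degree_eq_sum (ν : Fin r →₀ ℕ) : ν.degree = ∑ i : Fin r, ν i := by
  show ∑ i ∈ ν.support, ν i = ∑ i : Fin r, ν i
  exact Finset.sum_subset (Finset.subset_univ _)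
    (fun i _ hi => Finsupp.notMem_support_iff.mp hi)

lemma degree_emd (e : Equiv.Perm (Fin r)) (ν : Fin r →₀ ℕ) :
    (Finsupp.equivMapDomain e ν).degree = ν.degree := by
  rw [degree_eq_sum, degree_eq_sum]
  have : ∀ i, (Finsupp.equivMapDomain e ν) i = ν (e.symm i) := fun i => rfl
  simp_rw [this]
  exact Equiv.sum_comp e.symm ν

/-- The exponent vector `(n,…,n)`. -/
noncomputable def NN (r n : ℕ) : Fin r →₀ ℕ := Finsupp.equivFunOnFinite.symm (fun _ => n)

/-- The degree-`n` part of `q` as a polynomial. -/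
noncomputable def qpoly (r n : ℕ) : MvPolynomial (Fin r) ℤ :=
  ∑ ν ∈ (Finset.Iic (NN r n)).filter (fun ν => ν.degree = n),
    MvPolynomial.monomial ν (q r ν)

lemma coeff_qpoly (n : ℕ) (ν : Fin r →₀ ℕ) :
    MvPolynomial.coeff ν (qpoly r n) = if ν.degree = n then q r ν else 0 := by
  rw [qpoly, MvPolynomial.coeff_sum]
  simp_rw [MvPolynomial.coeff_monomial]
  by_cases h : ν.degree = n
  · rw [if_pos h]
    rw [Finset.sum_eq_single ν]
    · rw [if_pos rfl]
    · intro b _ hb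
      rw [if_neg hb]
    · intro hmem
      exfalso
      apply hmem
      rw [Finset.mem_filter, Finset.mem_Iic]
      refine ⟨?_, h⟩
      rw [Finsupp.le_def]
      intro i
      show ν i ≤ n
      rw [← h]
      exact Finsupp.le_degree i ν
  · rw [if_neg h]
    apply Finset.sum_eq_zero
    intro b hb
    rw [Finset.mem_filter] at hb
    rw [if_neg]
    intro hbν
    exact h (hbν ▸ hb.2)

lemma qpoly_symm (n : ℕ) : (qpoly r n).IsSymmetric := by
  intro e
  apply MvPolynomial.ext
  intro d
  have hd : d = Finsupp.mapDomain e (Finsupp.equivMapDomain e.symm d) := by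
    rw [← Finsupp.equivMapDomain_eq_mapDomain, emd_symm_emd]
  rw [hd, MvPolynomial.coeff_rename_mapDomain e e.injective]
  rw [coeff_qpoly, coeff_qpoly, ← Finsupp.equivMapDomain_eq_mapDomain,
    degree_emd, emd_symm_emd, q_symm]


lemma esymm_homogeneous (k : ℕ) : (MvPolynomial.esymm (Fin r) ℤ k).IsHomogeneous k := by
  rw [MvPolynomial.esymm]
  refine MvPolynomial.IsHomogeneous.sum _ _ _ fun S hS => ?_
  rw [Finset.mem_powersetCard] at hS
  have := MvPolynomial.IsHomogeneous.prod S
    (fun i => (MvPolynomial.X i : MvPolynomial (Fin r) ℤ)) (fun _ => (1 : ℕ))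
    (fun i _ => MvPolynomial.isHomogeneous_X _ _)
  rwa [Finset.sum_const, smul_eq_mul, mul_one, hS.2] at this

/-- The weight of an exponent vector for substitution into `s_1,…,s_r`. -/
def wt (μ : Fin r →₀ ℕ) : ℕ := ∑ j : Fin r, ((j : ℕ) + 1) * μ j

lemma E_homogeneous (μ : Fin r →₀ ℕ) :
    (∏ j : Fin r, MvPolynomial.esymm (Fin r) ℤ ((j : ℕ) + 1) ^ μ j).IsHomogeneous (wt μ) := by
  rw [wt]
  exact MvPolynomial.IsHomogeneous.prod _ _ _
    (fun j _ => (esymm_homogeneous ((j : ℕ) + 1)).pow (μ j))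

lemma coeff_E_zero {μ ν : Fin r →₀ ℕ} (h : ν.degree ≠ wt μ) :
    MvPolynomial.coeff ν (∏ j : Fin r, MvPolynomial.esymm (Fin r) ℤ ((j : ℕ) + 1) ^ μ j) = 0 :=
  (E_homogeneous μ).coeff_eq_zero h

lemma le_wt (μ : Fin r →₀ ℕ) (j : Fin r) : μ j ≤ wt μ := by
  calc μ j ≤ ((j : ℕ) + 1) * μ j := Nat.le_mul_of_pos_left _ (Nat.succ_pos _)
    _ ≤ wt μ := Finset.single_le_sum (f := fun j' : Fin r => ((j' : ℕ) + 1) * μ j')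
        (fun _ _ => Nat.zero_le _) (Finset.mem_univ j)

lemma exists_Ppoly (n : ℕ) :
    ∃ P : MvPolynomial (Fin r) ℤ,
      MvPolynomial.aeval (fun i : Fin r => MvPolynomial.esymm (Fin r) ℤ ((i : ℕ) + 1)) P
        = qpoly r n := by
  obtain ⟨P, hP⟩ := MvPolynomial.esymmAlgHom_surjective (σ := Fin r) (R := ℤ) (n := r)
    (by simp) ⟨qpoly r n, (MvPolynomial.mem_symmetricSubalgebra _).mpr (qpoly_symm n)⟩
  refine ⟨P, ?_⟩
  have := congrArg Subtype.val hP
  rwa [MvPolynomial.esymmAlgHom_apply] at this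

/-- A choice of polynomial expression of `qpoly r n` in the elementary symmetric polynomials. -/
noncomputable def Ppoly (r n : ℕ) : MvPolynomial (Fin r) ℤ := (exists_Ppoly n).choose

lemma Ppoly_spec (n : ℕ) :
    MvPolynomial.aeval (fun i : Fin r => MvPolynomial.esymm (Fin r) ℤ ((i : ℕ) + 1)) (Ppoly r n)
      = qpoly r n := (exists_Ppoly n).choose_spec

/-- The power series `G_r`. -/
noncomputable def Gser (r : ℕ) : MvPowerSeries (Fin r) ℤ :=
  fun μ => MvPolynomial.coeff μ (Ppoly r (wt μ))


end GrAux

namespace GrAux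

variable {r : ℕ}

lemma substEsymm_G : substEsymm r (Gser r) = q r := by
  funext ν
  show (∑ μ ∈ Finset.Iic (Finsupp.equivFunOnFinite.symm fun _ => ν.degree),
      MvPowerSeries.coeff μ (Gser r) *
        MvPolynomial.coeff ν (∏ j : Fin r, MvPolynomial.esymm (Fin r) ℤ ((j : ℕ) + 1) ^ μ j))
    = q r ν
  have hIic : (Finset.Iic (Finsupp.equivFunOnFinite.symm fun _ => ν.degree) : Finset (Fin r →₀ ℕ))
      = Finset.Iic (NN r ν.degree) := rfl
  rw [hIic]
  set n := ν.degree with hn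
  have step1 : (∑ μ ∈ Finset.Iic (NN r n),
      MvPowerSeries.coeff μ (Gser r) *
        MvPolynomial.coeff ν (∏ j : Fin r, MvPolynomial.esymm (Fin r) ℤ ((j : ℕ) + 1) ^ μ j))
      = ∑ μ ∈ Finset.Iic (NN r n),
        MvPolynomial.coeff μ (Ppoly r n) *
          MvPolynomial.coeff ν (∏ j : Fin r, MvPolynomial.esymm (Fin r) ℤ ((j : ℕ) + 1) ^ μ j) := by
    refine Finset.sum_congr rfl fun μ _ => ?_
    by_cases hw : wt μ = n
    · have : MvPowerSeries.coeff μ (Gser r) = MvPolynomial.coeff μ (Ppoly r n) := by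
        show MvPolynomial.coeff μ (Ppoly r (wt μ)) = MvPolynomial.coeff μ (Ppoly r n)
        rw [hw]
      rw [this]
    · rw [coeff_E_zero (show ν.degree ≠ wt μ from fun h => hw (h.symm.trans hn.symm)), mul_zero, mul_zero]
  rw [step1]
  have step2 : (∑ μ ∈ Finset.Iic (NN r n),
      MvPolynomial.coeff μ (Ppoly r n) *
        MvPolynomial.coeff ν (∏ j : Fin r, MvPolynomial.esymm (Fin r) ℤ ((j : ℕ) + 1) ^ μ j))
      = ∑ μ ∈ Finset.Iic (NN r n) ∪ (Ppoly r n).support,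
        MvPolynomial.coeff μ (Ppoly r n) *
          MvPolynomial.coeff ν (∏ j : Fin r, MvPolynomial.esymm (Fin r) ℤ ((j : ℕ) + 1) ^ μ j) := by
    refine Finset.sum_subset Finset.subset_union_left (fun μ _ hμ => ?_)
    by_cases hE : MvPolynomial.coeff ν
        (∏ j : Fin r, MvPolynomial.esymm (Fin r) ℤ ((j : ℕ) + 1) ^ μ j) = 0
    · rw [hE, mul_zero]
    · exfalso
      have hw : ν.degree = wt μ := by
        by_contra h
        exact hE (coeff_E_zero h)
      apply hμ
      rw [Finset.mem_Iic, Finsupp.le_def]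
      intro j
      show μ j ≤ n
      rw [hn, hw]
      exact le_wt μ j
  rw [step2]
  have step3 : (∑ μ ∈ Finset.Iic (NN r n) ∪ (Ppoly r n).support,
      MvPolynomial.coeff μ (Ppoly r n) *
        MvPolynomial.coeff ν (∏ j : Fin r, MvPolynomial.esymm (Fin r) ℤ ((j : ℕ) + 1) ^ μ j))
      = ∑ μ ∈ (Ppoly r n).support,
        MvPolynomial.coeff μ (Ppoly r n) *
          MvPolynomial.coeff ν (∏ j : Fin r, MvPolynomial.esymm (Fin r) ℤ ((j : ℕ) + 1) ^ μ j) := by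
    symm
    refine Finset.sum_subset Finset.subset_union_right (fun μ _ hμ => ?_)
    rw [MvPolynomial.notMem_support_iff.mp hμ, zero_mul]
  rw [step3]
  have step4 : (∑ μ ∈ (Ppoly r n).support,
      MvPolynomial.coeff μ (Ppoly r n) *
        MvPolynomial.coeff ν (∏ j : Fin r, MvPolynomial.esymm (Fin r) ℤ ((j : ℕ) + 1) ^ μ j))
      = MvPolynomial.coeff ν (qpoly r n) := by
    rw [← Ppoly_spec (r := r) n, MvPolynomial.aeval_def, MvPolynomial.eval₂_eq',
      MvPolynomial.coeff_sum]
    refine Finset.sum_congr rfl fun μ _ => ?_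
    rw [MvPolynomial.algebraMap_eq, MvPolynomial.coeff_C_mul]
  rw [step4, coeff_qpoly, if_pos hn.symm]

end GrAux

/-- For an integer `r ≥ 1` there exists a formal power series
`G_r ∈ ℤ[[u_1,…,u_r]]` such that `g_r(b) = 1 + s_r · G_r(s_1,…,s_r)` in `ℤ[[b_1,…,b_r]]`,
where `s_j` is the `j`-th elementary symmetric polynomial in `b_1,…,b_r`. -/
theorem gr_eq_one_add_esymm_mul (r : ℕ) (hr : 1 ≤ r) :
    ∃ G : MvPowerSeries (Fin r) ℤ,
      (gr r : MvPowerSeries (Fin r) ℤ) =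
        1 + (MvPolynomial.esymm (Fin r) ℤ r : MvPowerSeries (Fin r) ℤ) * substEsymm r G := by
  refine ⟨GrAux.Gser r, ?_⟩
  rw [GrAux.g_eq hr, GrAux.esymm_eq_monomial, GrAux.substEsymm_G]
end

section
/- (Lemma 8.2(1)) Let n ≥ 0 and r ≥ 1 be integers, and define J_{n,r}(a,b) := F_{n,r}(a,b) · g_r(b)^{−n} in ℤ[[a_1,…,a_n,b_1,…,b_r]] (g_r has constant term 1 and so is a unit). Then J_{n,r}(a,b) − 1 is divisible by b_1 b_2 ⋯ b_r: there exists a formal power series H with J_{n,r}(a,b) − 1 = b_1 b_2 ⋯ b_r · H. -/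
open MvPowerSeries Finset

/-- `F_{n,r}(a,b) := ∏_{i=1}^n ∏_{j=0}^r ∏_{k_1<⋯<k_j} (1 + a_i - b_{k_1} - ⋯ - b_{k_j})^{(-1)^j}`,
as a unit of `ℤ[[a_1,…,a_n,b_1,…,b_r]]`; the variable `a_i` is `X (Sum.inl i)` and `b_k` is
`X (Sum.inr k)`, and the inner double product is the product over all subsets `S ⊆ {b_1,…,b_r}`. -/
noncomputable def Fseries (n r : ℕ) : (MvPowerSeries (Fin n ⊕ Fin r) ℤ)ˣ :=
  ∏ i : Fin n, ∏ S : Finset (Fin r),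
    (unitOf (1 + MvPowerSeries.X (Sum.inl i) - ∑ k ∈ S, MvPowerSeries.X (Sum.inr k))
      (by simp)) ^ ((-1 : ℤ) ^ S.card)

/-- `g_r(b) := ∏_{j=0}^r ∏_{k_1<⋯<k_j} (1 - b_{k_1} - ⋯ - b_{k_j})^{(-1)^j}`, regarded as a
unit of `ℤ[[a_1,…,a_n,b_1,…,b_r]]` (it only involves the `b`-variables `X (Sum.inr k)`). -/
noncomputable def gseries (n r : ℕ) : (MvPowerSeries (Fin n ⊕ Fin r) ℤ)ˣ :=
  ∏ S : Finset (Fin r),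
    (unitOf (1 - ∑ k ∈ S, MvPowerSeries.X (Sum.inr k)) (by simp)) ^ ((-1 : ℤ) ^ S.card)

section Proj
variable {σ : Type*} [DecidableEq σ]

/-- Underlying function of the ring hom killing all monomials involving the variable `s`. -/
noncomputable def projFun (s : σ) (φ : MvPowerSeries σ ℤ) : MvPowerSeries σ ℤ :=
  fun m => if m s = 0 then coeff m φ else 0

theorem coeff_projFun (s : σ) (φ : MvPowerSeries σ ℤ) (m : σ →₀ ℕ) :
    coeff m (projFun s φ) = if m s = 0 then coeff m φ else 0 := rfl

/-- The ring hom killing all monomials involving the variable `s`. -/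
noncomputable def projAway (s : σ) : MvPowerSeries σ ℤ →+* MvPowerSeries σ ℤ where
  toFun := projFun s
  map_one' := by
    ext m
    rw [coeff_projFun]
    by_cases h : m s = 0
    · rw [if_pos h]
    · rw [if_neg h, coeff_one, if_neg (fun hm => h (by simp [hm]))]
  map_mul' φ ψ := by
    ext m
    rw [coeff_projFun, coeff_mul]
    by_cases h : m s = 0
    · rw [if_pos h, coeff_mul]
      refine Finset.sum_congr rfl fun p hp => ?_
      replace hp : p.1 + p.2 = m := by simpa using hp
      have hps : p.1 s + p.2 s = m s := by
        have := congrArg (fun f : σ →₀ ℕ => f s) hp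
        simpa using this
      rw [coeff_projFun, coeff_projFun, if_pos (by omega : p.1 s = 0),
        if_pos (by omega : p.2 s = 0)]
    · rw [if_neg h]
      refine (Finset.sum_eq_zero fun p hp => ?_).symm
      replace hp : p.1 + p.2 = m := by simpa using hp
      have hps : p.1 s + p.2 s = m s := by
        have := congrArg (fun f : σ →₀ ℕ => f s) hp
        simpa using this
      rw [coeff_projFun, coeff_projFun]
      by_cases h1 : p.1 s = 0
      · rw [if_neg (show ¬ p.2 s = 0 by omega), mul_zero]
      · rw [if_neg h1, zero_mul]
  map_zero' := by
    ext m
    rw [coeff_projFun]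
    by_cases h : m s = 0 <;> simp [h]
  map_add' φ ψ := by
    ext m
    rw [coeff_projFun, map_add, map_add, coeff_projFun, coeff_projFun]
    by_cases h : m s = 0 <;> simp [h]

theorem coeff_projAway (s : σ) (φ : MvPowerSeries σ ℤ) (m : σ →₀ ℕ) :
    coeff m (projAway s φ) = if m s = 0 then coeff m φ else 0 := rfl

theorem projAway_X_self (s : σ) : projAway s (X s : MvPowerSeries σ ℤ) = 0 := by
  ext m
  rw [coeff_projAway]
  by_cases h : m s = 0
  · rw [if_pos h, coeff_X, if_neg, coeff_zero]
    rintro rfl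
    simp at h
  · simp [h]

theorem projAway_X_ne (s t : σ) (h : t ≠ s) :
    projAway s (X t : MvPowerSeries σ ℤ) = X t := by
  ext m
  rw [coeff_projAway]
  by_cases hm : m s = 0
  · rw [if_pos hm]
  · rw [if_neg hm, coeff_X, if_neg]
    rintro rfl
    simp [Finsupp.single_apply, if_neg h] at hm

theorem projAway_constantCoeff (s : σ) (φ : MvPowerSeries σ ℤ) :
    constantCoeff (projAway s φ) = constantCoeff φ := by
  have h0 : constantCoeff (projAway s φ) = coeff 0 (projAway s φ) := rfl
  have h1 : constantCoeff φ = coeff 0 φ := rfl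
  rw [h0, h1, coeff_projAway, if_pos (by simp)]

end Proj

section Main

theorem unitOf_map_projAway {σ : Type*} [DecidableEq σ] (s : σ) (φ : MvPowerSeries σ ℤ)
    (h : MvPowerSeries.constantCoeff φ = 1) :
    Units.map (projAway s).toMonoidHom (unitOf φ h)
      = unitOf (projAway s φ) (by rw [projAway_constantCoeff, h]) :=
  Units.ext rfl

theorem sum_proj (n r : ℕ) (k : Fin r) (S : Finset (Fin r)) :
    ∑ j ∈ S, projAway (Sum.inr k) (X (Sum.inr j) : MvPowerSeries (Fin n ⊕ Fin r) ℤ)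
      = ∑ j ∈ S.erase k, X (Sum.inr j) := by
  by_cases hk : k ∈ S
  · rw [← Finset.add_sum_erase S _ hk, projAway_X_self, zero_add]
    refine Finset.sum_congr rfl fun j hj => ?_
    have hj' : j ≠ k := (Finset.mem_erase.mp hj).1
    exact projAway_X_ne _ _ (by simp [hj'])
  · rw [Finset.erase_eq_of_notMem hk]
    refine Finset.sum_congr rfl fun j hj => ?_
    have hj' : j ≠ k := fun h => hk (h ▸ hj)
    exact projAway_X_ne _ _ (by simp [hj'])

theorem key_prod (n r : ℕ) (k : Fin r) (c : MvPowerSeries (Fin n ⊕ Fin r) ℤ)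
    (hπ : projAway (Sum.inr k) c = c)
    (hc : ∀ S : Finset (Fin r),
      MvPowerSeries.constantCoeff (c - ∑ j ∈ S, MvPowerSeries.X (Sum.inr j)) = 1) :
    Units.map (projAway (Sum.inr k)).toMonoidHom
      (∏ S : Finset (Fin r),
        (unitOf (c - ∑ j ∈ S, MvPowerSeries.X (Sum.inr j)) (hc S)) ^ ((-1 : ℤ) ^ S.card)) = 1 := by
  have base : ∀ S : Finset (Fin r),
      Units.map (projAway (Sum.inr k)).toMonoidHom
          (unitOf (c - ∑ j ∈ S, MvPowerSeries.X (Sum.inr j)) (hc S))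
        = unitOf (c - ∑ j ∈ S.erase k, MvPowerSeries.X (Sum.inr j)) (hc (S.erase k)) := by
    intro S
    refine Units.ext ?_
    show projAway (Sum.inr k) (c - ∑ j ∈ S, MvPowerSeries.X (Sum.inr j)) = _
    rw [map_sub, hπ, map_sum, sum_proj]
    rfl
  rw [map_prod]
  refine Finset.prod_ninvolution (fun S => if k ∈ S then S.erase k else insert k S)
    ?_ ?_ (fun _ => Finset.mem_univ _) ?_
  · intro S
    rw [map_zpow, map_zpow, base S, base _]
    have herase : (if k ∈ S then S.erase k else insert k S).erase k = S.erase k := by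
      by_cases hk : k ∈ S
      · simp [hk, Finset.erase_idem]
      · simp [hk, Finset.erase_insert hk, Finset.erase_eq_of_notMem hk]
    have hcard : ((-1 : ℤ) ^ (if k ∈ S then S.erase k else insert k S).card)
        = -((-1 : ℤ) ^ S.card) := by
      by_cases hk : k ∈ S
      · rw [if_pos hk]
        have h1 : S.card = (S.erase k).card + 1 := (Finset.card_erase_add_one hk).symm
        rw [h1, pow_succ]; ring
      · rw [if_neg hk, Finset.card_insert_of_notMem hk, pow_succ]; ring
    rw [herase, hcard, zpow_neg, mul_inv_cancel]
  · intro S _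
    by_cases hk : k ∈ S
    · simp only [if_pos hk]
      exact Finset.erase_ne_self.mpr hk
    · simp only [if_neg hk]
      exact Finset.insert_ne_self.mpr hk
  · intro S
    beta_reduce
    by_cases hk : k ∈ S
    · rw [if_pos hk, if_neg (Finset.notMem_erase k S), Finset.insert_erase hk]
    · rw [if_neg hk, if_pos (Finset.mem_insert_self k S), Finset.erase_insert hk]

theorem mapF (n r : ℕ) (k : Fin r) :
    Units.map (projAway (Sum.inr k)).toMonoidHom (Fseries n r) = 1 := by
  rw [Fseries, map_prod]
  refine Finset.prod_eq_one fun i _ => ?_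
  exact key_prod n r k (1 + MvPowerSeries.X (Sum.inl i))
    (by rw [map_add, map_one, projAway_X_ne _ _ (by simp)]) (fun S => by simp)

theorem mapg (n r : ℕ) (k : Fin r) :
    Units.map (projAway (Sum.inr k)).toMonoidHom (gseries n r) = 1 := by
  rw [gseries]
  exact key_prod n r k 1 (map_one _) (fun S => by simp)

end Main

/-- **Lemma 8.2(1).** For integers `n ≥ 0` and `r ≥ 1`, the power series
`J_{n,r}(a,b) - 1 = F_{n,r}(a,b)·g_r(b)^{-n} - 1` is divisible by `b_1 b_2 ⋯ b_r`. -/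
theorem Jseries_sub_one_dvd (n r : ℕ) (hr : 1 ≤ r) :
    ∃ H : MvPowerSeries (Fin n ⊕ Fin r) ℤ,
      ((Fseries n r * gseries n r ^ (-(n : ℤ)) : (MvPowerSeries (Fin n ⊕ Fin r) ℤ)ˣ) :
          MvPowerSeries (Fin n ⊕ Fin r) ℤ) - 1 =
        (∏ k : Fin r, MvPowerSeries.X (Sum.inr k)) * H := by
  classical
  set J : MvPowerSeries (Fin n ⊕ Fin r) ℤ :=
    ((Fseries n r * gseries n r ^ (-(n : ℤ)) : (MvPowerSeries (Fin n ⊕ Fin r) ℤ)ˣ) :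
      MvPowerSeries (Fin n ⊕ Fin r) ℤ) with hJdef
  have hvan : ∀ (k : Fin r) (m : Fin n ⊕ Fin r →₀ ℕ), m (Sum.inr k) = 0 →
      coeff m (J - 1) = 0 := by
    intro k m hm
    have hJ : projAway (Sum.inr k) J = 1 := by
      have h1 : projAway (Sum.inr k) J
          = ((Units.map (projAway (Sum.inr k)).toMonoidHom
              (Fseries n r * gseries n r ^ (-(n : ℤ)))) : MvPowerSeries (Fin n ⊕ Fin r) ℤ) := rfl
      rw [h1, map_mul, map_zpow, mapF, mapg, one_zpow, mul_one, Units.val_one]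
    have h2 : coeff m (J - 1) = coeff m (projAway (Sum.inr k) (J - 1)) := by
      rw [coeff_projAway, if_pos hm]
    rw [h2, map_sub, hJ, map_one, sub_self, map_zero]
  set e : (Fin n ⊕ Fin r) →₀ ℕ := ∑ k : Fin r, Finsupp.single (Sum.inr k) 1 with he
  have hprod : (∏ k : Fin r, (MvPowerSeries.X (Sum.inr k) : MvPowerSeries (Fin n ⊕ Fin r) ℤ))
      = monomial e 1 := by
    rw [he]
    induction (Finset.univ : Finset (Fin r)) using Finset.cons_induction with
    | empty => simp [monomial_zero_one]
    | cons a s ha ih =>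
      rw [Finset.prod_cons, Finset.sum_cons, ih, X_def, monomial_mul_monomial, one_mul]
  refine ⟨(show MvPowerSeries (Fin n ⊕ Fin r) ℤ from fun m => coeff (m + e) (J - 1)), ?_⟩
  ext m
  rw [hprod, coeff_monomial_mul]
  by_cases hle : e ≤ m
  · rw [if_pos hle, one_mul]
    have h3 : coeff (m - e)
        ((fun m => coeff (m + e) (J - 1)) : MvPowerSeries (Fin n ⊕ Fin r) ℤ)
        = coeff (m - e + e) (J - 1) := rfl
    rw [h3, tsub_add_cancel_of_le hle]
  · rw [if_neg hle]
    obtain ⟨s, hs⟩ : ∃ s, ¬ e s ≤ m s := by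
      by_contra hcon
      push_neg at hcon
      exact hle (Finsupp.le_def.mpr hcon)
    have hes : ∀ k : Fin r, e (Sum.inr k) = 1 := by
      intro k
      rw [he]
      rw [Finsupp.finset_sum_apply]
      simp [Finsupp.single_apply]
    obtain ⟨k, rfl⟩ : ∃ k : Fin r, s = Sum.inr k := by
      cases s with
      | inl i =>
        exfalso
        apply hs
        have : e (Sum.inl i) = 0 := by
          rw [he, Finsupp.finset_sum_apply]
          simp [Finsupp.single_apply]
        simp [this]
      | inr k => exact ⟨k, rfl⟩
    have hmk : m (Sum.inr k) = 0 := by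
      have := hes k
      omega
    exact hvan k m hmk
end

section
/- (Well-definedness of the universal polynomial, Definition 8.3, specialized at integers) Let n ≥ 0 and r ≥ 1 be integers. For every integer m, the power series F_{n,r}(a,b) · g_r(b)^{m−n} − 1 is divisible by b_1 b_2 ⋯ b_r in ℤ[[a_1,…,a_n,b_1,…,b_r]]; in particular, the homogeneous component of total degree n + r of F_{n,r}(a,b) · g_r(b)^{m−n}, which is a polynomial in ℤ[a_1,…,a_n,b_1,…,b_r], is divisible by the monomial b_1 b_2 ⋯ b_r in that polynomial ring. -/
open MvPowerSeries Finset

/-- The power series `F_{n,r}(a,b) · g_r(b)^{m-n}` for an integer `m`. -/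
noncomputable def Fg (n r : ℕ) (m : ℤ) : MvPowerSeries (Fin n ⊕ Fin r) ℤ :=
  ((Fseries n r * gseries n r ^ (m - (n : ℤ)) : (MvPowerSeries (Fin n ⊕ Fin r) ℤ)ˣ) :
    MvPowerSeries (Fin n ⊕ Fin r) ℤ)

/-- The homogeneous component of total degree `d` of a multivariate power series in finitely
many variables, as a multivariate polynomial: the sum of `(coeff μ φ) · X^μ` over the (finitely
many) exponent vectors `μ` of total degree `d`. -/
noncomputable def homogComponent {σ : Type*} [Fintype σ] [DecidableEq σ]
    (d : ℕ) (φ : MvPowerSeries σ ℤ) : MvPolynomial σ ℤ :=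
  ∑ μ ∈ Finset.Iic (Finsupp.equivFunOnFinite.symm fun _ => d),
    if μ.degree = d then MvPolynomial.monomial μ (MvPowerSeries.coeff μ φ) else 0


namespace FgAux
variable {σ : Type*}

/-- The ring hom `ℤ[[X]] → ℤ[[X]]` setting the variable `s` to `0`. -/
noncomputable def kill (s : σ) : MvPowerSeries σ ℤ →+* MvPowerSeries σ ℤ where
  toFun φ := @id (MvPowerSeries σ ℤ) fun μ => if μ s = 0 then MvPowerSeries.coeff μ φ else 0
  map_one' := by
    classical
    apply MvPowerSeries.ext fun μ => ?_
    show (if μ s = 0 then MvPowerSeries.coeff μ 1 else 0) = _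
    rw [MvPowerSeries.coeff_one]
    by_cases h : μ s = 0
    · simp [h, MvPowerSeries.coeff_one]
    · have h0 : μ ≠ 0 := fun hh => h (by simp [hh])
      simp [h, h0, MvPowerSeries.coeff_one]
  map_mul' := fun φ ψ => by
    classical
    apply MvPowerSeries.ext fun μ => ?_
    show (if μ s = 0 then MvPowerSeries.coeff μ (φ * ψ) else 0) = _
    rw [MvPowerSeries.coeff_mul]
    by_cases h : μ s = 0
    · rw [if_pos h, MvPowerSeries.coeff_mul]
      refine Finset.sum_congr rfl fun p hp => ?_
      rw [Finset.HasAntidiagonal.mem_antidiagonal] at hp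
      have hps : p.1 s + p.2 s = μ s := by rw [← Finsupp.add_apply, hp]
      have h1 : p.1 s = 0 := by omega
      have h2 : p.2 s = 0 := by omega
      show _ = (if p.1 s = 0 then _ else 0) * (if p.2 s = 0 then _ else 0)
      rw [if_pos h1, if_pos h2]
    · rw [if_neg h]
      symm
      refine Finset.sum_eq_zero fun p hp => ?_
      rw [Finset.HasAntidiagonal.mem_antidiagonal] at hp
      have hps : p.1 s + p.2 s = μ s := by rw [← Finsupp.add_apply, hp]
      show (if p.1 s = 0 then _ else 0) * (if p.2 s = 0 then _ else 0) = 0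
      rcases (by omega : p.1 s ≠ 0 ∨ p.2 s ≠ 0) with h1 | h2
      · rw [if_neg h1, zero_mul]
      · rw [if_neg h2, mul_zero]
  map_zero' := by
    apply MvPowerSeries.ext fun μ => ?_
    show (if μ s = 0 then MvPowerSeries.coeff μ 0 else 0) = _
    simp
  map_add' := fun φ ψ => by
    classical
    apply MvPowerSeries.ext fun μ => ?_
    show (if μ s = 0 then MvPowerSeries.coeff μ (φ + ψ) else 0) = _
    show _ = (if μ s = 0 then MvPowerSeries.coeff μ φ else 0)
      + (if μ s = 0 then MvPowerSeries.coeff μ ψ else 0)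
    by_cases h : μ s = 0 <;> simp [h]

theorem coeff_kill (s : σ) (φ : MvPowerSeries σ ℤ) (μ : σ →₀ ℕ) :
    MvPowerSeries.coeff μ (kill s φ) = if μ s = 0 then MvPowerSeries.coeff μ φ else 0 :=
  rfl

theorem kill_X (s t : σ) [DecidableEq σ] :
    kill s (MvPowerSeries.X t) = if t = s then 0 else MvPowerSeries.X t := by
  apply MvPowerSeries.ext fun μ => ?_
  rw [coeff_kill]
  by_cases hts : t = s
  · subst hts
    rw [if_pos rfl]
    by_cases h : μ t = 0
    · rw [if_pos h, MvPowerSeries.coeff_X]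
      have : μ ≠ Finsupp.single t 1 := fun hh => by simp [hh] at h
      simp [this]
    · simp [h]
  · rw [if_neg hts]
    by_cases h : μ s = 0
    · rw [if_pos h]
    · rw [if_neg h, MvPowerSeries.coeff_X]
      have : μ ≠ Finsupp.single t 1 := fun hh => by
        subst hh; rw [Finsupp.single_apply, if_neg hts] at h; exact h rfl
      simp [this]

end FgAux

namespace FgAux2
open FgAux

theorem constantCoeff_kill {σ : Type*} (s : σ) (φ : MvPowerSeries σ ℤ) :
    MvPowerSeries.constantCoeff (kill s φ) = MvPowerSeries.constantCoeff φ := by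
  rw [← MvPowerSeries.coeff_zero_eq_constantCoeff_apply,
    ← MvPowerSeries.coeff_zero_eq_constantCoeff_apply, coeff_kill]
  simp

theorem prod_pow_neg_one {M : Type*} [CommGroup M] {r : ℕ} (k : Fin r)
    (u : Finset (Fin r) → M) (hu : ∀ S, u (S.erase k) = u S) :
    ∏ S : Finset (Fin r), u S ^ ((-1 : ℤ) ^ S.card) = 1 := by
  classical
  apply Finset.prod_ninvolution (g := fun S => if k ∈ S then S.erase k else insert k S)
  · intro S
    by_cases hk : k ∈ S
    · simp only [if_pos hk]
      have h1 : u (S.erase k) = u S := hu S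
      have hc : S.card = (S.erase k).card + 1 := by
        rw [Finset.card_erase_of_mem hk]
        have : 1 ≤ S.card := Finset.card_pos.2 ⟨k, hk⟩
        omega
      rw [h1, hc, pow_succ, ← zpow_add]
      simp
    · simp only [if_neg hk]
      have h1 : u (insert k S) = u S := by
        rw [← hu (insert k S), Finset.erase_insert hk]
      have hc : (insert k S).card = S.card + 1 := Finset.card_insert_of_notMem hk
      rw [h1, hc, pow_succ, ← zpow_add]
      simp
  · intro S _
    by_cases hk : k ∈ S
    · simp only [if_pos hk]
      exact fun hh => (Finset.erase_eq_self.1 hh) hk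
    · simp only [if_neg hk]
      exact fun hh => hk (Finset.insert_eq_self.1 hh)
  · intro S; exact Finset.mem_univ _
  · intro S
    by_cases hk : k ∈ S
    · simp only [if_pos hk]
      rw [if_neg (Finset.notMem_erase k S), Finset.insert_erase hk]
    · simp only [if_neg hk]
      rw [if_pos (Finset.mem_insert_self k S), Finset.erase_insert hk]

end FgAux2

namespace FgAux3
open FgAux FgAux2

theorem kill_inner (n r : ℕ) (k : Fin r) (ψ : MvPowerSeries (Fin n ⊕ Fin r) ℤ)
    (hψ : kill (Sum.inr k) ψ = ψ)
    (h : ∀ S : Finset (Fin r),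
      MvPowerSeries.constantCoeff (ψ - ∑ j ∈ S, MvPowerSeries.X (Sum.inr j)) = 1) :
    Units.map (kill (Sum.inr k)).toMonoidHom
      (∏ S : Finset (Fin r),
        (unitOf (ψ - ∑ j ∈ S, MvPowerSeries.X (Sum.inr j)) (h S)) ^ ((-1 : ℤ) ^ S.card)) = 1 := by
  classical
  have hbase : ∀ S : Finset (Fin r),
      Units.map (kill (Sum.inr k)).toMonoidHom
          (unitOf (ψ - ∑ j ∈ S, MvPowerSeries.X (Sum.inr j)) (h S))
        = unitOf (ψ - ∑ j ∈ S.erase k, MvPowerSeries.X (Sum.inr j)) (h (S.erase k)) := by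
    intro S
    apply Units.ext
    show kill (Sum.inr k) (ψ - ∑ j ∈ S, MvPowerSeries.X (Sum.inr j)) = _
    rw [map_sub, hψ, map_sum]
    congr 1
    have h1 : ∀ j ∈ S, kill (Sum.inr k) (MvPowerSeries.X (Sum.inr j) : MvPowerSeries (Fin n ⊕ Fin r) ℤ)
        = if j = k then 0 else MvPowerSeries.X (Sum.inr j) := by
      intro j _
      rw [kill_X]
      simp
    rw [Finset.sum_congr rfl h1]
    rw [← Finset.sum_erase S (by simp : (if k = k then (0 : MvPowerSeries (Fin n ⊕ Fin r) ℤ) else MvPowerSeries.X (Sum.inr k)) = 0)]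
    exact Finset.sum_congr rfl fun j hj => if_neg (Finset.ne_of_mem_erase hj)
  rw [map_prod]
  simp only [map_zpow, hbase]
  exact prod_pow_neg_one k
    (fun S => unitOf (ψ - ∑ j ∈ S.erase k, MvPowerSeries.X (Sum.inr j)) (h (S.erase k)))
    (fun S => by simp only [Finset.erase_idem])

theorem kill_Fg (n r : ℕ) (k : Fin r) (m : ℤ) :
    kill (Sum.inr k) (Fg n r m) = 1 := by
  classical
  have hF : Units.map (kill (Sum.inr k)).toMonoidHom (Fseries n r) = 1 := by
    rw [Fseries, map_prod]
    refine Finset.prod_eq_one fun i _ => ?_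
    exact kill_inner n r k (1 + MvPowerSeries.X (Sum.inl i))
      (by rw [map_add, map_one, kill_X]; simp) (fun S => by simp)
  have hg : Units.map (kill (Sum.inr k)).toMonoidHom (gseries n r) = 1 :=
    kill_inner n r k 1 (map_one _) (fun S => by simp)
  have : (kill (Sum.inr k)) (Fg n r m)
      = ((Units.map (kill (Sum.inr k)).toMonoidHom
          (Fseries n r * gseries n r ^ (m - (n : ℤ)))) : MvPowerSeries (Fin n ⊕ Fin r) ℤ) := rfl
  rw [this, map_mul, map_zpow, hF, hg, one_mul, one_zpow, Units.val_one]

end FgAux3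

namespace FgAux4
open FgAux FgAux2 FgAux3

variable (n r : ℕ)

/-- The exponent vector of `b_1 ⋯ b_r`. -/
noncomputable def iota : (Fin n ⊕ Fin r) →₀ ℕ :=
  ∑ k : Fin r, Finsupp.single (Sum.inr k) 1

theorem iota_inl (i : Fin n) : iota n r (Sum.inl i) = 0 := by
  rw [iota, Finsupp.finset_sum_apply]
  simp [Finsupp.single_apply]

theorem iota_inr (k : Fin r) : iota n r (Sum.inr k) = 1 := by
  classical
  rw [iota, Finsupp.finset_sum_apply]
  simp [Finsupp.single_apply]

theorem prod_X_pow (s : Finset (Fin r)) :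
    (∏ a ∈ s, MvPowerSeries.X (Sum.inr a) : MvPowerSeries (Fin n ⊕ Fin r) ℤ)
      = MvPowerSeries.monomial (∑ a ∈ s, Finsupp.single (Sum.inr a) 1) 1 := by
  classical
  induction s using Finset.induction with
  | empty => simp [MvPowerSeries.monomial_zero_one]
  | insert _ _ h ih =>
    rw [Finset.prod_insert h, Finset.sum_insert h, ih, MvPowerSeries.X_def,
      MvPowerSeries.monomial_mul_monomial, one_mul]

theorem prod_X_poly (s : Finset (Fin r)) :
    (∏ a ∈ s, MvPolynomial.X (Sum.inr a) : MvPolynomial (Fin n ⊕ Fin r) ℤ)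
      = MvPolynomial.monomial (∑ a ∈ s, Finsupp.single (Sum.inr a) 1) 1 := by
  classical
  induction s using Finset.induction with
  | empty => simp
  | insert _ _ h ih =>
    rw [Finset.prod_insert h, Finset.sum_insert h, ih, MvPolynomial.X,
      MvPolynomial.monomial_mul, one_mul]

theorem coeff_Fg_sub_one (m : ℤ) (μ : (Fin n ⊕ Fin r) →₀ ℕ) (hμ : ¬ iota n r ≤ μ) :
    MvPowerSeries.coeff μ (Fg n r m - 1) = 0 := by
  rw [Finsupp.le_def] at hμ
  push_neg at hμ
  obtain ⟨s, hs⟩ := hμ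
  obtain (i | k) := s
  · rw [iota_inl] at hs; omega
  · rw [iota_inr] at hs
    have hk : μ (Sum.inr k) = 0 := by omega
    have h1 : MvPowerSeries.coeff μ (Fg n r m) = MvPowerSeries.coeff μ (1 : MvPowerSeries (Fin n ⊕ Fin r) ℤ) := by
      conv_rhs => rw [← kill_Fg n r k m]
      rw [coeff_kill, if_pos hk]
    rw [map_sub, h1, sub_self]

end FgAux4

/-- For integers `n ≥ 0`, `r ≥ 1` and every integer `m`, the power series
`F_{n,r}(a,b)·g_r(b)^{m-n} - 1` is divisible by `b_1 ⋯ b_r` in `ℤ[[a,b]]`; in particular its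
homogeneous component of total degree `n + r` is divisible by the monomial `b_1 ⋯ b_r`
in the polynomial ring `ℤ[a,b]`. -/
theorem Fg_sub_one_dvd_and_homogComponent_dvd (n r : ℕ) (hr : 1 ≤ r) (m : ℤ) :
    (∃ H : MvPowerSeries (Fin n ⊕ Fin r) ℤ,
        Fg n r m - 1 = (∏ k : Fin r, MvPowerSeries.X (Sum.inr k)) * H) ∧
      ∃ Q : MvPolynomial (Fin n ⊕ Fin r) ℤ,
        homogComponent (n + r) (Fg n r m) =
          (∏ k : Fin r, MvPolynomial.X (Sum.inr k)) * Q := by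
  classical
  constructor
  · refine ⟨(@id (MvPowerSeries (Fin n ⊕ Fin r) ℤ) fun ν => MvPowerSeries.coeff (ν + FgAux4.iota n r) (Fg n r m - 1) :
      MvPowerSeries (Fin n ⊕ Fin r) ℤ), ?_⟩
    have hP : (∏ k : Fin r, MvPowerSeries.X (Sum.inr k) : MvPowerSeries (Fin n ⊕ Fin r) ℤ)
        = MvPowerSeries.monomial (FgAux4.iota n r) 1 := by
      rw [FgAux4.prod_X_pow]; rfl
    rw [hP]
    apply MvPowerSeries.ext fun μ => ?_
    rw [MvPowerSeries.coeff_monomial_mul]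
    by_cases hι : FgAux4.iota n r ≤ μ
    · rw [if_pos hι, one_mul]
      show _ = MvPowerSeries.coeff ((μ - FgAux4.iota n r) + FgAux4.iota n r) (Fg n r m - 1)
      rw [tsub_add_cancel_of_le hι]
    · rw [if_neg hι]
      exact FgAux4.coeff_Fg_sub_one n r m μ hι
  · refine ⟨∑ μ ∈ Finset.Iic (Finsupp.equivFunOnFinite.symm fun _ => (n + r)),
      if μ.degree = n + r ∧ FgAux4.iota n r ≤ μ
      then MvPolynomial.monomial (μ - FgAux4.iota n r) (MvPowerSeries.coeff μ (Fg n r m))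
      else 0, ?_⟩
    have hP : (∏ k : Fin r, MvPolynomial.X (Sum.inr k) : MvPolynomial (Fin n ⊕ Fin r) ℤ)
        = MvPolynomial.monomial (FgAux4.iota n r) 1 := by
      rw [FgAux4.prod_X_poly]; rfl
    rw [hP, homogComponent, Finset.mul_sum]
    refine Finset.sum_congr rfl fun μ _ => ?_
    by_cases hd : μ.degree = n + r
    · rw [if_pos hd]
      by_cases hι : FgAux4.iota n r ≤ μ
      · rw [if_pos (⟨hd, hι⟩ : μ.degree = n + r ∧ FgAux4.iota n r ≤ μ),
          MvPolynomial.monomial_mul, one_mul, add_tsub_cancel_of_le hι]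
      · rw [if_neg (fun hc : μ.degree = n + r ∧ FgAux4.iota n r ≤ μ => hι hc.2)]
        have h0 : MvPowerSeries.coeff μ (Fg n r m) = 0 := by
          have hμ0 : μ ≠ 0 := by
            intro hh
            rw [hh, map_zero] at hd
            omega
          have h1 : MvPowerSeries.coeff μ (1 : MvPowerSeries (Fin n ⊕ Fin r) ℤ) = 0 := by
            rw [MvPowerSeries.coeff_one, if_neg hμ0]
          have h2 := FgAux4.coeff_Fg_sub_one n r m μ hι
          rw [map_sub, h1, sub_zero] at h2
          exact h2
        rw [h0, MvPolynomial.monomial_zero, mul_zero]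
    · rw [if_neg hd, if_neg (fun hc : μ.degree = n + r ∧ FgAux4.iota n r ≤ μ => hd hc.1),
        mul_zero]
end

section
/- (Coefficients of F_{n,r} · g_r^{t_0 − n} are numerical polynomials in t_0) Let n ≥ 0 and r ≥ 1 be integers. For every exponent vector μ ∈ ℕ^{n+r}, there exists a polynomial q_μ ∈ ℚ[x] such that for every integer m, the coefficient of the monomial a_1^{μ_1} ⋯ a_n^{μ_n} b_1^{μ_{n+1}} ⋯ b_r^{μ_{n+r}} in the power series F_{n,r}(a,b) · g_r(b)^{m−n} ∈ ℤ[[a_1,…,a_n,b_1,…,b_r]] equals q_μ(m). In particular, q_μ takes integer values at all integers. -/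
open MvPowerSeries Finset

variable {σ : Type*}

lemma aux_coeff_pow_zero {v : MvPowerSeries σ ℤ} (hv : MvPowerSeries.constantCoeff v = 0) :
    ∀ (j : ℕ) (ν : σ →₀ ℕ), (ν.sum fun _ e => e) < j → MvPowerSeries.coeff ν (v ^ j) = 0 := by
  intro j
  induction j with
  | zero => intro ν h; omega
  | succ j ih =>
    intro ν h
    classical
    rw [pow_succ, mul_comm, MvPowerSeries.coeff_mul]
    refine Finset.sum_eq_zero fun p hp => ?_
    rw [Finset.HasAntidiagonal.mem_antidiagonal] at hp
    by_cases h1 : p.1 = 0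
    · have : p.2 = ν := by rw [← hp, h1, zero_add]
      rw [h1, MvPowerSeries.coeff_zero_eq_constantCoeff, hv, zero_mul]
    · have hsum : (p.1.sum fun _ e => e) + (p.2.sum fun _ e => e) = ν.sum fun _ e => e := by
        rw [← hp]; exact (Finsupp.sum_add_index' (fun _ => rfl) (fun _ _ _ => rfl)).symm
      have h1' : 1 ≤ p.1.sum fun _ e => e := by
        rw [Nat.one_le_iff_ne_zero]
        intro h0
        apply h1
        ext s
        by_cases hs : s ∈ p.1.support
        · exact Finset.sum_eq_zero_iff.mp h0 s hs
        · simpa using Finsupp.notMem_support_iff.mp hs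
      have : (p.2.sum fun _ e => e) < j := by omega
      rw [ih p.2 this, mul_zero]

lemma aux_coeff_mul_pow_zero {v : MvPowerSeries σ ℤ} (hv : MvPowerSeries.constantCoeff v = 0)
    (φ : MvPowerSeries σ ℤ) {j : ℕ} {μ : σ →₀ ℕ} (h : (μ.sum fun _ e => e) < j) :
    MvPowerSeries.coeff μ (φ * v ^ j) = 0 := by
  classical
  rw [MvPowerSeries.coeff_mul]
  refine Finset.sum_eq_zero fun p hp => ?_
  rw [Finset.HasAntidiagonal.mem_antidiagonal] at hp
  have hsum : ((p.1.sum fun _ e => e) + p.2.sum fun _ e => e) = μ.sum fun _ e => e := by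
    rw [← hp]; exact (Finsupp.sum_add_index' (fun _ => rfl) (fun _ _ _ => rfl)).symm
  rw [aux_coeff_pow_zero hv j p.2 (by omega), mul_zero]

lemma aux_binomial {v : MvPowerSeries σ ℤ} (hv : MvPowerSeries.constantCoeff v = 0)
    (φ : MvPowerSeries σ ℤ) (μ : σ →₀ ℕ) (k : ℕ) :
    MvPowerSeries.coeff μ (φ * (1 + v) ^ k) =
      ∑ j ∈ range ((μ.sum fun _ e => e) + 1),
        (k.choose j : ℤ) * MvPowerSeries.coeff μ (φ * v ^ j) := by
  classical
  set d := μ.sum fun _ e => e with hd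
  set t : ℕ → ℤ := fun j => (k.choose j : ℤ) * MvPowerSeries.coeff μ (φ * v ^ j) with ht
  have hbin : (1 + v) ^ k = ∑ j ∈ range (k + 1), (k.choose j) • v ^ j := by
    rw [add_comm, add_pow]
    refine Finset.sum_congr rfl fun j _ => ?_
    rw [one_pow, mul_one, nsmul_eq_mul, mul_comm]
  have step : MvPowerSeries.coeff μ (φ * (1 + v) ^ k) = ∑ j ∈ range (k + 1), t j := by
    rw [hbin, Finset.mul_sum, map_sum]
    refine Finset.sum_congr rfl fun j _ => ?_
    rw [mul_smul_comm, map_nsmul, nsmul_eq_mul, ht]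
  have hzero : ∀ j ∈ range (max k d + 1), j ∉ range (k + 1) → t j = 0 := by
    intro j _ hj
    rw [Finset.mem_range, not_lt] at hj
    simp [ht, Nat.choose_eq_zero_of_lt (by omega : k < j)]
  have hzero' : ∀ j ∈ range (max k d + 1), j ∉ range (d + 1) → t j = 0 := by
    intro j _ hj
    rw [Finset.mem_range, not_lt] at hj
    rw [ht]
    simp only
    rw [aux_coeff_mul_pow_zero hv φ (by omega), mul_zero]
  have h1 : ∑ j ∈ range (k + 1), t j = ∑ j ∈ range (max k d + 1), t j :=
    Finset.sum_subset (by intro x hx; simp_all [Finset.mem_range]) hzero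
  have h2 : ∑ j ∈ range (d + 1), t j = ∑ j ∈ range (max k d + 1), t j :=
    Finset.sum_subset (by intro x hx; simp_all [Finset.mem_range]) hzero'
  rw [step, h1, ← h2]

lemma constantCoeff_gseries (n r : ℕ) :
    MvPowerSeries.constantCoeff (gseries n r : MvPowerSeries (Fin n ⊕ Fin r) ℤ) = 1 := by
  have h : Units.map (MvPowerSeries.constantCoeff (σ := Fin n ⊕ Fin r) (R := ℤ)).toMonoidHom
      (gseries n r) = 1 := by
    rw [gseries, map_prod]
    refine Finset.prod_eq_one fun S _ => ?_
    rw [map_zpow]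
    convert one_zpow _
    ext
    simp [unitOf]
  have h2 := congrArg Units.val h
  simpa using h2

lemma key_poly (n r : ℕ) (μ : (Fin n ⊕ Fin r) →₀ ℕ) :
    ∃ q : Polynomial ℚ, ∀ k : ℤ,
      ((MvPowerSeries.coeff μ ↑(Fseries n r * gseries n r ^ k) : ℤ) : ℚ) = q.eval (k : ℚ) := by
  classical
  set G := gseries n r with hG
  set g : MvPowerSeries (Fin n ⊕ Fin r) ℤ := ↑G with hg
  set v := g - 1 with hv
  have hvc : MvPowerSeries.constantCoeff v = 0 := by
    rw [hv, map_sub, hg, hG, constantCoeff_gseries]; simp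
  have hgv : (1 : MvPowerSeries (Fin n ⊕ Fin r) ℤ) + v = g := by rw [hv]; ring
  set d := μ.sum fun _ e => e with hd
  set c : ℕ → ℕ → ℤ := fun N j =>
    MvPowerSeries.coeff μ (↑(Fseries n r * G ^ (-(N:ℤ))) * v ^ j) with hc
  set p : ℕ → Polynomial ℚ := fun N =>
    ∑ j ∈ range (d+1), Polynomial.C ((c N j : ℚ) / j.factorial) * descPochhammer ℚ j with hp
  set q : ℕ → Polynomial ℚ := fun N => (p N).comp (Polynomial.X + Polynomial.C (N:ℚ)) with hq
  have hpeval : ∀ N t : ℕ, (p N).eval (t : ℚ) =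
      ∑ j ∈ range (d+1), (t.choose j : ℚ) * (c N j : ℚ) := by
    intro N t
    rw [hp]
    simp only [Polynomial.eval_finset_sum, Polynomial.eval_mul, Polynomial.eval_C]
    refine Finset.sum_congr rfl fun j _ => ?_
    rw [descPochhammer_eval_eq_descFactorial, Nat.descFactorial_eq_factorial_mul_choose]
    have hj : (j.factorial : ℚ) ≠ 0 := by exact_mod_cast j.factorial_ne_zero
    push_cast
    field_simp
  have hmain : ∀ (N : ℕ) (k : ℤ), -(N:ℤ) ≤ k →
      ((MvPowerSeries.coeff μ ↑(Fseries n r * G ^ k) : ℤ) : ℚ) = (q N).eval (k : ℚ) := by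
    intro N k hk
    set t : ℕ := (k + N).toNat with htdef
    have htk : (t : ℤ) = k + N := Int.toNat_of_nonneg (by omega)
    have hunit : (Fseries n r * G ^ k) = (Fseries n r * G ^ (-(N:ℤ))) * G ^ (t : ℤ) := by
      rw [mul_assoc, ← zpow_add, htk]
      ring_nf
    have hval : (↑(Fseries n r * G ^ k) : MvPowerSeries (Fin n ⊕ Fin r) ℤ)
        = ↑(Fseries n r * G ^ (-(N:ℤ))) * g ^ t := by
      rw [hunit, Units.val_mul, zpow_natCast, Units.val_pow_eq_pow_val]
    rw [hval, ← hgv, aux_binomial hvc _ μ t]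
    rw [hq, Polynomial.eval_comp]
    simp only [Polynomial.eval_add, Polynomial.eval_X, Polynomial.eval_C]
    have hcast : ((k:ℚ) + N) = (t : ℚ) := by
      have := congrArg (Int.cast : ℤ → ℚ) htk
      push_cast at this
      linarith
    rw [hcast, hpeval N t]
    push_cast
    refine Finset.sum_congr rfl fun j _ => ?_
    simp [hc, Units.val_mul]
  have hqeq : ∀ N, q N = q 0 := by
    intro N
    apply Polynomial.eq_of_infinite_eval_eq
    have hsub : Set.range (Nat.cast : ℕ → ℚ) ⊆
        { x | Polynomial.eval x (q N) = Polynomial.eval x (q 0) } := by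
      rintro x ⟨t, rfl⟩
      have h1 := hmain N (t : ℤ) (by omega)
      have h2 := hmain 0 (t : ℤ) (by omega)
      have : ((t:ℤ):ℚ) = (t:ℚ) := by push_cast; rfl
      rw [this] at h1 h2
      exact h1.symm.trans h2
    exact Set.Infinite.mono hsub (Set.infinite_range_of_injective Nat.cast_injective)
  refine ⟨q 0, fun k => ?_⟩
  rw [← hqeq ((-k).toNat)]
  exact hmain ((-k).toNat) k (by omega)

/-- For integers `n ≥ 0`, `r ≥ 1` and every exponent vector `μ`, there is a
polynomial `q = q_μ ∈ ℚ[x]` such that for every integer `m` the coefficient of the monomial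
`a^μ b^μ` in `F_{n,r}(a,b)·g_r(b)^{m-n}` equals `q(m)`; in particular `q` takes integer
values at all integers. -/
theorem coeff_Fg_numericalPolynomial (n r : ℕ) (hr : 1 ≤ r) (μ : (Fin n ⊕ Fin r) →₀ ℕ) :
    ∃ q : Polynomial ℚ,
      (∀ m : ℤ, ((MvPowerSeries.coeff μ (Fg n r m) : ℤ) : ℚ) = q.eval (m : ℚ)) ∧
        ∀ m : ℤ, ∃ z : ℤ, q.eval (m : ℚ) = (z : ℚ) := by
  obtain ⟨q0, hq0⟩ := key_poly n r μ
  refine ⟨q0.comp (Polynomial.X - Polynomial.C (n:ℚ)), fun m => ?_, fun m => ?_⟩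
  · rw [Polynomial.eval_comp]
    simp only [Polynomial.eval_sub, Polynomial.eval_X, Polynomial.eval_C]
    have := hq0 (m - n)
    rw [Fg]
    push_cast at this ⊢
    exact this
  · refine ⟨MvPowerSeries.coeff μ (Fg n r m), ?_⟩
    rw [Polynomial.eval_comp]
    simp only [Polynomial.eval_sub, Polynomial.eval_X, Polynomial.eval_C]
    have := hq0 (m - n)
    rw [Fg]
    push_cast at this ⊢
    exact this.symm
end
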